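/- For any real a and any s > 0, the total variation distance between N(a, s²) and N(0, 1) is at most |a|/√(2π) + |log(s²)|/√(2πe). -/

import Mathlib

open MeasureTheory ProbabilityTheory Real Set

/-- Total variation distance between two measures on ℝ:
the supremum over measurable sets of the absolute difference of the probabilities. -/
noncomputable def tvDist (P Q : Measure ℝ) : ℝ :=
  sSup {x | ∃ A : Set ℝ, MeasurableSet A ∧ x = |(P A).toReal - (Q A).toReal|}

/-- Standard normal cumulative distribution function. -/
noncomputable def stdNormalCDF (x : ℝ) : ℝ :=
  ∫ u in Iic x, Real.exp (-u ^ 2 / 2) / Real.sqrt (2 * Real.pi)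

/-- C.d.f. of the chi-square distribution with one degree of freedom. -/
noncomputable def chiSqOneCDF (x : ℝ) : ℝ := 2 * stdNormalCDF (Real.sqrt x) - 1

open scoped NNReal

lemma gr_toReal (μ : ℝ) {v : ℝ≥0} (hv : v ≠ 0) (s : Set ℝ) :
    ((gaussianReal μ v) s).toReal = ∫ x in s, gaussianPDFReal μ v x := by
  rw [gaussianReal_apply_eq_integral _ hv, ENNReal.toReal_ofReal]
  exact integral_nonneg fun x => gaussianPDFReal_nonneg _ _ _

lemma oneSided {μ₁ μ₂ : ℝ} {v₁ v₂ : ℝ≥0} (h₁ : v₁ ≠ 0) (h₂ : v₂ ≠ 0) {S : Set ℝ}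
    (hS : MeasurableSet S)
    (hin : ∀ x ∈ S, gaussianPDFReal μ₂ v₂ x ≤ gaussianPDFReal μ₁ v₁ x)
    (hout : ∀ x ∉ S, gaussianPDFReal μ₁ v₁ x ≤ gaussianPDFReal μ₂ v₂ x)
    {B : Set ℝ} (hB : MeasurableSet B) :
    ((gaussianReal μ₁ v₁) B).toReal - ((gaussianReal μ₂ v₂) B).toReal
      ≤ ((gaussianReal μ₁ v₁) S).toReal - ((gaussianReal μ₂ v₂) S).toReal := by
  have hf : Integrable (gaussianPDFReal μ₁ v₁) := integrable_gaussianPDFReal _ _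
  have hg : Integrable (gaussianPDFReal μ₂ v₂) := integrable_gaussianPDFReal _ _
  have hfg : Integrable (fun x => gaussianPDFReal μ₁ v₁ x - gaussianPDFReal μ₂ v₂ x) := hf.sub hg
  rw [gr_toReal _ h₁, gr_toReal _ h₂, gr_toReal _ h₁, gr_toReal _ h₂]
  rw [← integral_sub hf.integrableOn hg.integrableOn, ← integral_sub hf.integrableOn hg.integrableOn]
  have h1 : (∫ x in B ∩ S, (gaussianPDFReal μ₁ v₁ x - gaussianPDFReal μ₂ v₂ x))
      + ∫ x in B \ S, (gaussianPDFReal μ₁ v₁ x - gaussianPDFReal μ₂ v₂ x)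
      = ∫ x in B, (gaussianPDFReal μ₁ v₁ x - gaussianPDFReal μ₂ v₂ x) :=
    integral_inter_add_diff hS hfg.integrableOn
  have h2 : (∫ x in B \ S, (gaussianPDFReal μ₁ v₁ x - gaussianPDFReal μ₂ v₂ x)) ≤ 0 :=
    setIntegral_nonpos (hB.diff hS) fun x hx => sub_nonpos.2 (hout x hx.2)
  have h3 : (∫ x in B ∩ S, (gaussianPDFReal μ₁ v₁ x - gaussianPDFReal μ₂ v₂ x))
      ≤ ∫ x in S, (gaussianPDFReal μ₁ v₁ x - gaussianPDFReal μ₂ v₂ x) := by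
    apply setIntegral_mono_set hfg.integrableOn
    · exact (ae_restrict_iff' hS).2 (Filter.Eventually.of_forall fun x hx => sub_nonneg.2 (hin x hx))
    · exact HasSubset.Subset.eventuallyLE inter_subset_right
  linarith

lemma compl_toReal (μ : Measure ℝ) [IsProbabilityMeasure μ] {S : Set ℝ} (hS : MeasurableSet S) :
    (μ S).toReal = 1 - (μ Sᶜ).toReal := by
  have h := measure_add_measure_compl (μ := μ) hS
  rw [measure_univ] at h
  have h2 : (μ S).toReal + (μ Sᶜ).toReal = 1 := by
    rw [← ENNReal.toReal_add (measure_ne_top _ _) (measure_ne_top _ _), h, ENNReal.toReal_one]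
  linarith

lemma pair_bound {μ₁ μ₂ : ℝ} {v₁ v₂ : ℝ≥0} (h₁ : v₁ ≠ 0) (h₂ : v₂ ≠ 0) {S : Set ℝ}
    (hS : MeasurableSet S)
    (hin : ∀ x ∈ S, gaussianPDFReal μ₂ v₂ x ≤ gaussianPDFReal μ₁ v₁ x)
    (hout : ∀ x ∉ S, gaussianPDFReal μ₁ v₁ x ≤ gaussianPDFReal μ₂ v₂ x)
    {A : Set ℝ} (hA : MeasurableSet A) :
    |((gaussianReal μ₁ v₁) A).toReal - ((gaussianReal μ₂ v₂) A).toReal|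
      ≤ ((gaussianReal μ₁ v₁) S).toReal - ((gaussianReal μ₂ v₂) S).toReal := by
  have hb1 := oneSided h₁ h₂ hS hin hout hA
  have hb2 := oneSided h₁ h₂ hS hin hout hA.compl
  have c1 := compl_toReal (gaussianReal μ₁ v₁) hA
  have c2 := compl_toReal (gaussianReal μ₂ v₂) hA
  rw [abs_sub_le_iff]
  constructor <;> linarith

lemma pdf01 (x : ℝ) : gaussianPDFReal 0 1 x = (Real.sqrt (2*π))⁻¹ * rexp (-x^2/2) := by
  simp [gaussianPDFReal]

lemma pdf1 (a x : ℝ) : gaussianPDFReal a 1 x = (Real.sqrt (2*π))⁻¹ * rexp (-(x-a)^2/2) := by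
  simp [gaussianPDFReal]

lemma sqrt2pi_pos : 0 < Real.sqrt (2*π) := Real.sqrt_pos.2 (by positivity)

lemma gauss_Icc_le_width {c d : ℝ} (hcd : c ≤ d) :
    ((gaussianReal 0 1) (Icc c d)).toReal ≤ (d - c) / Real.sqrt (2*π) := by
  rw [gr_toReal 0 one_ne_zero]
  have hpt : ∀ x ∈ Icc c d, gaussianPDFReal 0 1 x ≤ (Real.sqrt (2*π))⁻¹ := by
    intro x _
    rw [pdf01]
    calc (Real.sqrt (2*π))⁻¹ * rexp (-x^2/2) ≤ (Real.sqrt (2*π))⁻¹ * 1 := by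
          apply mul_le_mul_of_nonneg_left _ (by positivity)
          rw [Real.exp_le_one_iff]
          nlinarith [sq_nonneg x]
      _ = (Real.sqrt (2*π))⁻¹ := mul_one _
  calc (∫ x in Icc c d, gaussianPDFReal 0 1 x) ≤ ∫ _x in Icc c d, (Real.sqrt (2*π))⁻¹ := by
        apply setIntegral_mono_on (integrable_gaussianPDFReal _ _).integrableOn _ measurableSet_Icc hpt
        rw [integrableOn_const_iff]
        exact Or.inr (by rw [Real.volume_Icc]; exact ENNReal.ofReal_lt_top)
    _ = (volume (Icc c d)).toReal • (Real.sqrt (2*π))⁻¹ := setIntegral_const _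
    _ = (d - c) / Real.sqrt (2*π) := by
        rw [Real.volume_Icc, ENNReal.toReal_ofReal (by linarith), smul_eq_mul, div_eq_mul_inv]

lemma gauss_symm (c d : ℝ) :
    (gaussianReal 0 1) (Icc (-d) (-c)) = (gaussianReal 0 1) (Icc c d) := by
  have hv : (⟨(-1:ℝ)^2, sq_nonneg _⟩ : ℝ≥0) * 1 = 1 := by ext; norm_num
  have hmap : (gaussianReal 0 1).map (fun x => (-1:ℝ) * x) = gaussianReal 0 1 := by
    rw [gaussianReal_map_const_mul, mul_zero]; exact congrArg (gaussianReal 0) hv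
  calc (gaussianReal 0 1) (Icc (-d) (-c))
      = ((gaussianReal 0 1).map (fun x => (-1:ℝ) * x)) (Icc (-d) (-c)) := by rw [hmap]
    _ = (gaussianReal 0 1) ((fun x => (-1:ℝ) * x) ⁻¹' (Icc (-d) (-c))) :=
        Measure.map_apply (measurable_const_mul _) measurableSet_Icc
    _ = (gaussianReal 0 1) (Icc c d) := by
        congr 1
        ext x
        simp only [mem_preimage, mem_Icc, neg_one_mul]
        constructor <;> rintro ⟨h1, h2⟩ <;> constructor <;> linarith

lemma gauss_Icc_le_log {c d : ℝ} (hc : 0 < c) (hcd : c ≤ d) :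
    ((gaussianReal 0 1) (Icc c d)).toReal
      ≤ (Real.log d - Real.log c) / Real.sqrt (2*π*Real.exp 1) := by
  have hd : 0 < d := hc.trans_le hcd
  have hKpos : 0 < Real.sqrt (2*π*Real.exp 1) := Real.sqrt_pos.2 (by positivity)
  have hKsplit : Real.sqrt (2*π*Real.exp 1) = Real.sqrt (2*π) * Real.sqrt (Real.exp 1) :=
    Real.sqrt_mul (by positivity) _
  have hpt : ∀ x ∈ Icc c d, gaussianPDFReal 0 1 x ≤ (Real.sqrt (2*π*Real.exp 1))⁻¹ * x⁻¹ := by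
    intro x hx
    have hx0 : 0 < x := hc.trans_le hx.1
    rw [pdf01]
    have hlog : Real.log x ≤ (x^2-1)/2 := by
      have h := Real.log_le_sub_one_of_pos hx0
      nlinarith [sq_nonneg (x-1)]
    have key : rexp (-x^2/2) ≤ rexp (-(1:ℝ)/2) * x⁻¹ := by
      rw [← div_eq_mul_inv, le_div_iff₀ hx0]
      calc rexp (-x^2/2) * x = rexp (-x^2/2 + Real.log x) := by
            rw [Real.exp_add, Real.exp_log hx0]
        _ ≤ rexp (-(1:ℝ)/2) := Real.exp_le_exp.2 (by linarith)
    have h2 : rexp (-(1:ℝ)/2) = (Real.sqrt (Real.exp 1))⁻¹ := by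
      rw [← Real.exp_half, ← Real.exp_neg]
      norm_num
    calc (Real.sqrt (2*π))⁻¹ * rexp (-x^2/2)
        ≤ (Real.sqrt (2*π))⁻¹ * (rexp (-(1:ℝ)/2) * x⁻¹) :=
          mul_le_mul_of_nonneg_left key (by positivity)
      _ = (Real.sqrt (2*π*Real.exp 1))⁻¹ * x⁻¹ := by
          rw [h2, hKsplit, mul_inv]; ring
  have hint : IntegrableOn (fun x => (Real.sqrt (2*π*Real.exp 1))⁻¹ * x⁻¹) (Icc c d) := by
    apply ContinuousOn.integrableOn_Icc
    apply ContinuousOn.mul continuousOn_const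
    apply ContinuousOn.inv₀ (continuousOn_id)
    intro x hx
    exact (hc.trans_le hx.1).ne'
  rw [gr_toReal 0 one_ne_zero]
  calc (∫ x in Icc c d, gaussianPDFReal 0 1 x)
      ≤ ∫ x in Icc c d, (Real.sqrt (2*π*Real.exp 1))⁻¹ * x⁻¹ :=
        setIntegral_mono_on (integrable_gaussianPDFReal _ _).integrableOn hint measurableSet_Icc hpt
    _ = (Real.sqrt (2*π*Real.exp 1))⁻¹ * ∫ x in Icc c d, x⁻¹ := integral_const_mul _ _
    _ = (Real.sqrt (2*π*Real.exp 1))⁻¹ * (Real.log d - Real.log c) := by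
        rw [integral_Icc_eq_integral_Ioc, ← intervalIntegral.integral_of_le hcd,
          integral_inv_of_pos hc hd, Real.log_div hd.ne' hc.ne']
    _ = (Real.log d - Real.log c) / Real.sqrt (2*π*Real.exp 1) := by
        rw [div_eq_mul_inv, mul_comm]

lemma gauss_W {c d : ℝ} (hc : 0 < c) (hcd : c ≤ d) :
    ((gaussianReal 0 1) {x : ℝ | c ≤ |x| ∧ |x| ≤ d}).toReal
      ≤ 2*(Real.log d - Real.log c) / Real.sqrt (2*π*Real.exp 1) := by
  have hset : {x : ℝ | c ≤ |x| ∧ |x| ≤ d} = Icc (-d) (-c) ∪ Icc c d := by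
    ext x
    simp only [mem_setOf_eq, mem_union, mem_Icc]
    rcases le_or_gt 0 x with h | h
    · rw [abs_of_nonneg h]
      constructor
      · rintro ⟨h1, h2⟩; right; exact ⟨h1, h2⟩
      · rintro (⟨h1, h2⟩ | ⟨h1, h2⟩) <;> constructor <;> linarith
    · rw [abs_of_neg h]
      constructor
      · rintro ⟨h1, h2⟩; left; constructor <;> linarith
      · rintro (⟨h1, h2⟩ | ⟨h1, h2⟩) <;> constructor <;> linarith
  rw [hset]
  have h1 : (gaussianReal 0 1) (Icc (-d) (-c) ∪ Icc c d)
      ≤ (gaussianReal 0 1) (Icc (-d) (-c)) + (gaussianReal 0 1) (Icc c d) := measure_union_le _ _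
  have h2 : ((gaussianReal 0 1) (Icc (-d) (-c) ∪ Icc c d)).toReal
      ≤ ((gaussianReal 0 1) (Icc (-d) (-c))).toReal + ((gaussianReal 0 1) (Icc c d)).toReal := by
    rw [← ENNReal.toReal_add (measure_ne_top _ _) (measure_ne_top _ _)]
    exact ENNReal.toReal_mono (ENNReal.add_ne_top.2 ⟨measure_ne_top _ _, measure_ne_top _ _⟩) h1
  have h3 := gauss_Icc_le_log hc hcd
  rw [gauss_symm] at h2
  calc ((gaussianReal 0 1) (Icc (-d) (-c) ∪ Icc c d)).toReal
      ≤ ((gaussianReal 0 1) (Icc c d)).toReal + ((gaussianReal 0 1) (Icc c d)).toReal := h2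
    _ ≤ 2*(Real.log d - Real.log c) / Real.sqrt (2*π*Real.exp 1) := by
        rw [mul_div_assoc]; linarith

lemma mean_cmp (a x : ℝ) :
    gaussianPDFReal 0 1 x ≤ gaussianPDFReal a 1 x ↔ a^2 ≤ 2*a*x := by
  rw [pdf01, pdf1, mul_le_mul_iff_right₀ (by positivity), Real.exp_le_exp,
    div_le_div_iff_of_pos_right (by norm_num)]
  constructor <;> intro h <;> nlinarith

lemma map_shift (a : ℝ) {v : ℝ≥0} {E : Set ℝ} (hE : MeasurableSet E) :
    (gaussianReal a v) E = (gaussianReal 0 v) ((· + a) ⁻¹' E) := by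
  have h : gaussianReal a v = (gaussianReal 0 v).map (· + a) := by
    rw [gaussianReal_map_add_const, zero_add]
  rw [h, Measure.map_apply (measurable_add_const a) hE]

lemma meanBound (a : ℝ) {A : Set ℝ} (hA : MeasurableSet A) :
    |((gaussianReal a 1) A).toReal - ((gaussianReal 0 1) A).toReal|
      ≤ |a| / Real.sqrt (2*π) := by
  rcases lt_trichotomy a 0 with ha | rfl | ha
  · -- a < 0, S = Iic (a/2)
    have hin : ∀ x ∈ Iic (a/2), gaussianPDFReal 0 1 x ≤ gaussianPDFReal a 1 x := by
      intro x hx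
      rw [mean_cmp]
      have : x ≤ a/2 := hx
      nlinarith
    have hout : ∀ x ∉ Iic (a/2), gaussianPDFReal a 1 x ≤ gaussianPDFReal 0 1 x := by
      intro x hx
      have hx' : a/2 < x := not_le.1 hx
      rcases le_total (gaussianPDFReal a 1 x) (gaussianPDFReal 0 1 x) with h | h
      · exact h
      · rw [mean_cmp] at h; nlinarith
    have hb := pair_bound one_ne_zero one_ne_zero measurableSet_Iic hin hout hA
    have hmapM : (gaussianReal a 1) (Iic (a/2)) = (gaussianReal 0 1) (Iic (-a/2)) := by
      rw [map_shift a measurableSet_Iic]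
      congr 1
      ext x
      simp only [mem_preimage, mem_Iic]
      constructor <;> intro <;> linarith
    have hsplit : (gaussianReal 0 1) (Iic (-a/2))
        = (gaussianReal 0 1) (Iic (a/2)) + (gaussianReal 0 1) (Ioc (a/2) (-a/2)) := by
      rw [← Iic_union_Ioc_eq_Iic (by linarith : a/2 ≤ -a/2), measure_union _ measurableSet_Ioc]
      rw [Set.disjoint_left]
      intro x hx hx'
      exact absurd hx' (by simp only [mem_Ioc, not_and, not_le]; intro h; exact absurd h (not_lt.2 hx))
    have harith : ((gaussianReal 0 1) (Iic (-a/2))).toReal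
        = ((gaussianReal 0 1) (Iic (a/2))).toReal + ((gaussianReal 0 1) (Ioc (a/2) (-a/2))).toReal := by
      rw [hsplit, ENNReal.toReal_add (measure_ne_top _ _) (measure_ne_top _ _)]
    have hIoc : ((gaussianReal 0 1) (Ioc (a/2) (-a/2))).toReal ≤ (-a) / Real.sqrt (2*π) := by
      calc ((gaussianReal 0 1) (Ioc (a/2) (-a/2))).toReal
          ≤ ((gaussianReal 0 1) (Icc (a/2) (-a/2))).toReal :=
            ENNReal.toReal_mono (measure_ne_top _ _) (measure_mono Ioc_subset_Icc_self)
        _ ≤ (-a/2 - a/2) / Real.sqrt (2*π) := gauss_Icc_le_width (by linarith)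
        _ = (-a) / Real.sqrt (2*π) := by ring_nf
    rw [abs_of_neg ha]
    calc |((gaussianReal a 1) A).toReal - ((gaussianReal 0 1) A).toReal|
        ≤ ((gaussianReal a 1) (Iic (a/2))).toReal - ((gaussianReal 0 1) (Iic (a/2))).toReal := hb
      _ = ((gaussianReal 0 1) (Ioc (a/2) (-a/2))).toReal := by rw [hmapM]; linarith
      _ ≤ (-a) / Real.sqrt (2*π) := hIoc
  · simp [sub_self, abs_zero]
  · -- a > 0, S = Ici (a/2)
    have hin : ∀ x ∈ Ici (a/2), gaussianPDFReal 0 1 x ≤ gaussianPDFReal a 1 x := by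
      intro x hx
      rw [mean_cmp]
      have : a/2 ≤ x := hx
      nlinarith
    have hout : ∀ x ∉ Ici (a/2), gaussianPDFReal a 1 x ≤ gaussianPDFReal 0 1 x := by
      intro x hx
      have hx' : x < a/2 := not_le.1 hx
      rcases le_total (gaussianPDFReal a 1 x) (gaussianPDFReal 0 1 x) with h | h
      · exact h
      · rw [mean_cmp] at h; nlinarith
    have hb := pair_bound one_ne_zero one_ne_zero measurableSet_Ici hin hout hA
    have hmapM : (gaussianReal a 1) (Ici (a/2)) = (gaussianReal 0 1) (Ici (-a/2)) := by
      rw [map_shift a measurableSet_Ici]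
      congr 1
      ext x
      simp only [mem_preimage, mem_Ici]
      constructor <;> intro <;> linarith
    have hsplit : (gaussianReal 0 1) (Ici (-a/2))
        = (gaussianReal 0 1) (Ico (-a/2) (a/2)) + (gaussianReal 0 1) (Ici (a/2)) := by
      rw [← Ico_union_Ici_eq_Ici (by linarith : -a/2 ≤ a/2), measure_union _ measurableSet_Ici]
      rw [Set.disjoint_left]
      intro x hx hx'
      exact absurd hx' (not_le.2 hx.2)
    have harith : ((gaussianReal 0 1) (Ici (-a/2))).toReal
        = ((gaussianReal 0 1) (Ico (-a/2) (a/2))).toReal + ((gaussianReal 0 1) (Ici (a/2))).toReal := by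
      rw [hsplit, ENNReal.toReal_add (measure_ne_top _ _) (measure_ne_top _ _)]
    have hIco : ((gaussianReal 0 1) (Ico (-a/2) (a/2))).toReal ≤ a / Real.sqrt (2*π) := by
      calc ((gaussianReal 0 1) (Ico (-a/2) (a/2))).toReal
          ≤ ((gaussianReal 0 1) (Icc (-a/2) (a/2))).toReal :=
            ENNReal.toReal_mono (measure_ne_top _ _) (measure_mono Ico_subset_Icc_self)
        _ ≤ (a/2 - (-a/2)) / Real.sqrt (2*π) := gauss_Icc_le_width (by linarith)
        _ = a / Real.sqrt (2*π) := by ring_nf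
    rw [abs_of_pos ha]
    calc |((gaussianReal a 1) A).toReal - ((gaussianReal 0 1) A).toReal|
        ≤ ((gaussianReal a 1) (Ici (a/2))).toReal - ((gaussianReal 0 1) (Ici (a/2))).toReal := hb
      _ = ((gaussianReal 0 1) (Ico (-a/2) (a/2))).toReal := by rw [hmapM]; linarith
      _ ≤ a / Real.sqrt (2*π) := hIco

lemma var_cmp {s : ℝ} (hs : 0 < s) (a x : ℝ) :
    gaussianPDFReal a 1 x ≤ gaussianPDFReal a (Real.toNNReal (s^2)) x ↔
      Real.log s ≤ (x-a)^2*(s^2-1)/(2*s^2) := by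
  have hcoe : ((Real.toNNReal (s^2) : ℝ≥0) : ℝ) = s^2 := Real.coe_toNNReal _ (sq_nonneg s)
  rw [pdf1]
  unfold gaussianPDFReal
  rw [hcoe]
  have hsqrt : Real.sqrt (2*π*s^2) = Real.sqrt (2*π) * s := by
    rw [Real.sqrt_mul (by positivity), Real.sqrt_sq hs.le]
  rw [hsqrt, mul_inv, mul_assoc, mul_le_mul_iff_right₀ (inv_pos.2 sqrt2pi_pos),
    inv_mul_eq_div, le_div_iff₀ hs]
  have hx : rexp (-(x-a)^2/2) * s = rexp (-(x-a)^2/2 + Real.log s) := by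
    rw [Real.exp_add, Real.exp_log hs]
  rw [hx, Real.exp_le_exp]
  have h1 : (0:ℝ) < 2*s^2 := by positivity
  rw [le_div_iff₀ h1, le_div_iff₀ h1]
  constructor <;> intro h <;> nlinarith [h]

lemma map_scale {s : ℝ} (hs : 0 < s) {E : Set ℝ} (hE : MeasurableSet E) :
    (gaussianReal 0 (Real.toNNReal (s^2))) E = (gaussianReal 0 1) ((fun x => s * x) ⁻¹' E) := by
  have hv : (⟨s^2, sq_nonneg s⟩ : ℝ≥0) * 1 = Real.toNNReal (s^2) := by
    ext
    simp [Real.coe_toNNReal _ (sq_nonneg s)]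
  have h : gaussianReal 0 (Real.toNNReal (s^2)) = (gaussianReal 0 1).map (fun x => s * x) := by
    rw [show (fun x : ℝ => s * x) = (s * ·) from rfl, gaussianReal_map_const_mul, mul_zero]
    exact congrArg (gaussianReal 0) hv.symm
  rw [h, Measure.map_apply (measurable_const_mul s) hE]

lemma varBound (a s : ℝ) (hs : 0 < s) {A : Set ℝ} (hA : MeasurableSet A) :
    |((gaussianReal a (Real.toNNReal (s^2))) A).toReal - ((gaussianReal a 1) A).toReal|
      ≤ |Real.log (s^2)| / Real.sqrt (2*π*Real.exp 1) := by
  have hv : (Real.toNNReal (s^2)) ≠ 0 := by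
    simp only [ne_eq, Real.toNNReal_eq_zero, not_le]
    positivity
  have hmeas : Measurable fun x : ℝ => |x - a| :=
    (continuous_abs.comp (continuous_sub_right a)).measurable
  have hmeasLt : ∀ r : ℝ, MeasurableSet {x : ℝ | |x| < r} :=
    fun r => continuous_abs.measurable measurableSet_Iio
  have hmeasLe : ∀ r : ℝ, MeasurableSet {x : ℝ | |x| ≤ r} :=
    fun r => continuous_abs.measurable measurableSet_Iic
  have hlogsq : Real.log (s^2) = 2 * Real.log s := by
    rw [Real.log_pow]; push_cast; ring
  rcases lt_trichotomy s 1 with hs1 | rfl | hs1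
  · -- s < 1
    have hl : Real.log s < 0 := Real.log_neg hs hs1
    have hs2 : s^2 - 1 < 0 := by nlinarith
    have harg : 0 < 2*s^2*Real.log s/(s^2-1) :=
      div_pos_of_neg_of_neg (mul_neg_of_pos_of_neg (by positivity) hl) (by linarith)
    set t : ℝ := Real.sqrt (2*s^2*Real.log s/(s^2-1)) with ht
    have ht2 : t^2 = 2*s^2*Real.log s/(s^2-1) := Real.sq_sqrt harg.le
    have htpos : 0 < t := Real.sqrt_pos.2 harg
    have hkey : t^2 * (s^2-1) = 2*s^2*Real.log s := by
      rw [ht2, div_mul_cancel₀ _ hs2.ne]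
    have httts : t ≤ t/s := by
      rw [le_div_iff₀ hs]; nlinarith
    have hS : MeasurableSet {x : ℝ | |x - a| ≤ t} := hmeas measurableSet_Iic
    have hin : ∀ x ∈ {x : ℝ | |x - a| ≤ t},
        gaussianPDFReal a 1 x ≤ gaussianPDFReal a (Real.toNNReal (s^2)) x := by
      intro x hx
      rw [var_cmp hs, le_div_iff₀ (by positivity)]
      have h2 : (x-a)^2 ≤ t^2 := by
        calc (x-a)^2 = |x-a|^2 := (sq_abs _).symm
          _ ≤ t^2 := pow_le_pow_left₀ (abs_nonneg _) hx 2
      nlinarith [mul_le_mul_of_nonpos_right h2 hs2.le]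
    have hout : ∀ x ∉ {x : ℝ | |x - a| ≤ t},
        gaussianPDFReal a (Real.toNNReal (s^2)) x ≤ gaussianPDFReal a 1 x := by
      intro x hx
      have hx' : t < |x - a| := not_le.1 hx
      rcases le_total (gaussianPDFReal a (Real.toNNReal (s^2)) x) (gaussianPDFReal a 1 x) with h | h
      · exact h
      · rw [var_cmp hs, le_div_iff₀ (by positivity)] at h
        have h2 : t^2 < (x-a)^2 := by
          calc t^2 < |x-a|^2 := pow_lt_pow_left₀ hx' htpos.le two_ne_zero
            _ = (x-a)^2 := sq_abs _
        have hF : False := by nlinarith [mul_lt_mul_of_neg_right h2 hs2]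
        exact hF.elim
    have hb := pair_bound hv one_ne_zero hS hin hout hA
    have hpre1 : ((· + a) ⁻¹' {x : ℝ | |x - a| ≤ t}) = {x : ℝ | |x| ≤ t} := by
      ext x; simp [mem_preimage]
    have hMS : (gaussianReal a 1) {x : ℝ | |x - a| ≤ t} = (gaussianReal 0 1) {x : ℝ | |x| ≤ t} := by
      rw [map_shift a hS, hpre1]
    have hPS : (gaussianReal a (Real.toNNReal (s^2))) {x : ℝ | |x - a| ≤ t}
        = (gaussianReal 0 1) {x : ℝ | |x| ≤ t/s} := by
      rw [map_shift a hS, hpre1, map_scale hs (hmeasLe t)]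
      congr 1
      ext x
      simp only [mem_preimage, mem_setOf_eq]
      rw [abs_mul, abs_of_pos hs, mul_comm, ← le_div_iff₀ hs]
    have hsub : {x : ℝ | |x| ≤ t/s} ⊆ {x : ℝ | |x| ≤ t} ∪ {x : ℝ | t ≤ |x| ∧ |x| ≤ t/s} := by
      intro x hx
      rcases le_total (|x|) t with h | h
      · exact Or.inl h
      · exact Or.inr ⟨h, hx⟩
    have hQle : ((gaussianReal 0 1) {x : ℝ | |x| ≤ t/s}).toReal
        ≤ ((gaussianReal 0 1) {x : ℝ | |x| ≤ t}).toReal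
          + ((gaussianReal 0 1) {x : ℝ | t ≤ |x| ∧ |x| ≤ t/s}).toReal := by
      rw [← ENNReal.toReal_add (measure_ne_top _ _) (measure_ne_top _ _)]
      exact ENNReal.toReal_mono (ENNReal.add_ne_top.2 ⟨measure_ne_top _ _, measure_ne_top _ _⟩)
        ((measure_mono hsub).trans (measure_union_le _ _))
    have hW := gauss_W htpos httts
    have hlogdiff : Real.log (t/s) - Real.log t = - Real.log s := by
      rw [Real.log_div htpos.ne' hs.ne']; ring
    have habs : |Real.log (s^2)| = -(2 * Real.log s) := by
      rw [hlogsq, abs_of_neg (by linarith)]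
    calc |((gaussianReal a (Real.toNNReal (s^2))) A).toReal - ((gaussianReal a 1) A).toReal|
        ≤ ((gaussianReal a (Real.toNNReal (s^2))) {x : ℝ | |x - a| ≤ t}).toReal
          - ((gaussianReal a 1) {x : ℝ | |x - a| ≤ t}).toReal := hb
      _ ≤ ((gaussianReal 0 1) {x : ℝ | t ≤ |x| ∧ |x| ≤ t/s}).toReal := by
          rw [hPS, hMS]; linarith
      _ ≤ 2*(Real.log (t/s) - Real.log t) / Real.sqrt (2*π*Real.exp 1) := hW
      _ = |Real.log (s^2)| / Real.sqrt (2*π*Real.exp 1) := by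
          rw [hlogdiff, habs]; ring_nf
  · -- s = 1
    have h1 : Real.toNNReal ((1:ℝ)^2) = 1 := by norm_num
    rw [h1, sub_self, abs_zero]
    positivity
  · -- s > 1
    have hl : 0 < Real.log s := Real.log_pos hs1
    have hs2 : 0 < s^2 - 1 := by nlinarith
    have harg : 0 < 2*s^2*Real.log s/(s^2-1) := div_pos (by nlinarith) hs2
    set t : ℝ := Real.sqrt (2*s^2*Real.log s/(s^2-1)) with ht
    have ht2 : t^2 = 2*s^2*Real.log s/(s^2-1) := Real.sq_sqrt harg.le
    have htpos : 0 < t := Real.sqrt_pos.2 harg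
    have hkey : t^2 * (s^2-1) = 2*s^2*Real.log s := by
      rw [ht2, div_mul_cancel₀ _ hs2.ne']
    have htst : t/s ≤ t := by
      rw [div_le_iff₀ hs]; nlinarith
    have htspos : 0 < t/s := by positivity
    have hS : MeasurableSet {x : ℝ | t ≤ |x - a|} := hmeas measurableSet_Ici
    have hin : ∀ x ∈ {x : ℝ | t ≤ |x - a|},
        gaussianPDFReal a 1 x ≤ gaussianPDFReal a (Real.toNNReal (s^2)) x := by
      intro x hx
      rw [var_cmp hs, le_div_iff₀ (by positivity)]
      have h2 : t^2 ≤ (x-a)^2 := by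
        calc t^2 ≤ |x-a|^2 := pow_le_pow_left₀ htpos.le hx 2
          _ = (x-a)^2 := sq_abs _
      nlinarith [mul_le_mul_of_nonneg_right h2 hs2.le]
    have hout : ∀ x ∉ {x : ℝ | t ≤ |x - a|},
        gaussianPDFReal a (Real.toNNReal (s^2)) x ≤ gaussianPDFReal a 1 x := by
      intro x hx
      have hx' : |x - a| < t := not_le.1 hx
      rcases le_total (gaussianPDFReal a (Real.toNNReal (s^2)) x) (gaussianPDFReal a 1 x) with h | h
      · exact h
      · rw [var_cmp hs, le_div_iff₀ (by positivity)] at h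
        have h2 : (x-a)^2 < t^2 := by
          calc (x-a)^2 = |x-a|^2 := (sq_abs _).symm
            _ < t^2 := pow_lt_pow_left₀ hx' (abs_nonneg _) two_ne_zero
        have hF : False := by nlinarith [mul_lt_mul_of_pos_right h2 hs2]
        exact hF.elim
    have hb := pair_bound hv one_ne_zero hS hin hout hA
    have hcP := compl_toReal (gaussianReal a (Real.toNNReal (s^2))) hS
    have hcM := compl_toReal (gaussianReal a 1) hS
    have hScompl : {x : ℝ | t ≤ |x - a|}ᶜ = {x : ℝ | |x - a| < t} := by
      ext x; simp [not_le]
    have hSc : MeasurableSet {x : ℝ | |x - a| < t} := hmeas measurableSet_Iio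
    have hpre1 : ((· + a) ⁻¹' {x : ℝ | |x - a| < t}) = {x : ℝ | |x| < t} := by
      ext x; simp [mem_preimage]
    have hMS : (gaussianReal a 1) {x : ℝ | |x - a| < t} = (gaussianReal 0 1) {x : ℝ | |x| < t} := by
      rw [map_shift a hSc, hpre1]
    have hPS : (gaussianReal a (Real.toNNReal (s^2))) {x : ℝ | |x - a| < t}
        = (gaussianReal 0 1) {x : ℝ | |x| < t/s} := by
      rw [map_shift a hSc, hpre1, map_scale hs (hmeasLt t)]
      congr 1
      ext x
      simp only [mem_preimage, mem_setOf_eq]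
      rw [abs_mul, abs_of_pos hs, mul_comm, ← lt_div_iff₀ hs]
    have hsub : {x : ℝ | |x| < t} ⊆ {x : ℝ | |x| < t/s} ∪ {x : ℝ | t/s ≤ |x| ∧ |x| ≤ t} := by
      intro x hx
      rcases lt_or_ge (|x|) (t/s) with h | h
      · exact Or.inl h
      · exact Or.inr ⟨h, le_of_lt hx⟩
    have hQle : ((gaussianReal 0 1) {x : ℝ | |x| < t}).toReal
        ≤ ((gaussianReal 0 1) {x : ℝ | |x| < t/s}).toReal
          + ((gaussianReal 0 1) {x : ℝ | t/s ≤ |x| ∧ |x| ≤ t}).toReal := by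
      rw [← ENNReal.toReal_add (measure_ne_top _ _) (measure_ne_top _ _)]
      exact ENNReal.toReal_mono (ENNReal.add_ne_top.2 ⟨measure_ne_top _ _, measure_ne_top _ _⟩)
        ((measure_mono hsub).trans (measure_union_le _ _))
    have hW := gauss_W htspos htst
    have hlogdiff : Real.log t - Real.log (t/s) = Real.log s := by
      rw [Real.log_div htpos.ne' hs.ne']; ring
    have habs : |Real.log (s^2)| = 2 * Real.log s := by
      rw [hlogsq, abs_of_pos (by linarith)]
    calc |((gaussianReal a (Real.toNNReal (s^2))) A).toReal - ((gaussianReal a 1) A).toReal|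
        ≤ ((gaussianReal a (Real.toNNReal (s^2))) {x : ℝ | t ≤ |x - a|}).toReal
          - ((gaussianReal a 1) {x : ℝ | t ≤ |x - a|}).toReal := hb
      _ = ((gaussianReal a 1) {x : ℝ | |x - a| < t}).toReal
          - ((gaussianReal a (Real.toNNReal (s^2))) {x : ℝ | |x - a| < t}).toReal := by
          rw [hcP, hcM, hScompl]; ring
      _ ≤ ((gaussianReal 0 1) {x : ℝ | t/s ≤ |x| ∧ |x| ≤ t}).toReal := by
          rw [hPS, hMS]; linarith
      _ ≤ 2*(Real.log t - Real.log (t/s)) / Real.sqrt (2*π*Real.exp 1) := hW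
      _ = |Real.log (s^2)| / Real.sqrt (2*π*Real.exp 1) := by
          rw [hlogdiff, habs]


theorem stmt9 (a s : ℝ) (hs : 0 < s) :
    tvDist (gaussianReal a (Real.toNNReal (s ^ 2))) (gaussianReal 0 1)
      ≤ |a| / Real.sqrt (2 * Real.pi)
        + |Real.log (s ^ 2)| / Real.sqrt (2 * Real.pi * Real.exp 1) := by
  unfold tvDist
  apply Real.sSup_le
  · rintro x ⟨A, hA, rfl⟩
    calc |((gaussianReal a (Real.toNNReal (s ^ 2))) A).toReal - ((gaussianReal 0 1) A).toReal|
        ≤ |((gaussianReal a (Real.toNNReal (s ^ 2))) A).toReal - ((gaussianReal a 1) A).toReal|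
          + |((gaussianReal a 1) A).toReal - ((gaussianReal 0 1) A).toReal| := abs_sub_le _ _ _
      _ ≤ |a| / Real.sqrt (2 * Real.pi)
          + |Real.log (s ^ 2)| / Real.sqrt (2 * Real.pi * Real.exp 1) := by
          have h1 := varBound a s hs hA
          have h2 := meanBound a hA
          linarith
  · positivity
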